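/- Let α be a confluent partial action of a monoid M on a set X with globalization Y. If a = u·x ∈ Y has normal form v·y, then a ∈ w·X for every w ∈ M with v ⪯ w ⪯ u in the prefix order. -/
import Mathlib


/-- One-step reduction on words over `G` induced by the rules `R` of a monoid
presentation `⟨G|R⟩`. -/
def MStep {G : Type*} (R : List G → List G → Prop) : List G → List G → Prop :=
  fun w₁ w₂ => ∃ a l r b : List G, R l r ∧ w₁ = a ++ l ++ b ∧ w₂ = a ++ r ++ b

/-- One-step reduction on `G* × X` for a confluent partial action: either
rewrite the word via `R`, or let the last (rightmost, acting first) generator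
act on the point. -/
def PStep {G X : Type*} (R : List G → List G → Prop) (act : G → X → Option X) :
    List G × X → List G × X → Prop := fun p q =>
  (MStep R p.1 q.1 ∧ p.2 = q.2) ∨
  (∃ (w : List G) (g : G) (y : X),
    p.1 = w ++ [g] ∧ act g p.2 = some y ∧ q.1 = w ∧ q.2 = y)

private lemma rtg_eqvGen {α : Type*} {r : α → α → Prop} {a b : α}
    (h : Relation.ReflTransGen r a b) : Relation.EqvGen r a b := by
  induction h with
  | refl => exact Relation.EqvGen.refl _
  | tail _ h ih => exact ih.trans _ _ _ (Relation.EqvGen.rel _ _ h)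

private lemma eqvGen_join {α : Type*} {r : α → α → Prop}
    (hconf : ∀ a b c, Relation.ReflTransGen r a b → Relation.ReflTransGen r a c →
      ∃ d, Relation.ReflTransGen r b d ∧ Relation.ReflTransGen r c d)
    {a b : α} (h : Relation.EqvGen r a b) :
    ∃ c, Relation.ReflTransGen r a c ∧ Relation.ReflTransGen r b c := by
  induction h with
  | rel a b h => exact ⟨b, Relation.ReflTransGen.single h, .refl⟩
  | refl a => exact ⟨a, .refl, .refl⟩
  | symm a b _ ih => exact ⟨ih.choose, ih.choose_spec.2, ih.choose_spec.1⟩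
  | trans a b c _ _ ih1 ih2 =>
      obtain ⟨d, had, hbd⟩ := ih1
      obtain ⟨e, hbe, hce⟩ := ih2
      obtain ⟨f, hdf, hef⟩ := hconf b d e hbd hbe
      exact ⟨f, had.trans hdf, hce.trans hef⟩

private lemma rtg_of_normal {α : Type*} {r : α → α → Prop} {b c : α}
    (hb : ∀ x, ¬ r b x) (h : Relation.ReflTransGen r b c) : c = b := by
  rcases h.cases_head with h | ⟨d, hd, _⟩
  · exact h.symm
  · exact absurd hd (hb _)

private lemma eqvGen_to_normal {α : Type*} {r : α → α → Prop}
    (hconf : ∀ a b c, Relation.ReflTransGen r a b → Relation.ReflTransGen r a c →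
      ∃ d, Relation.ReflTransGen r b d ∧ Relation.ReflTransGen r c d)
    {a b : α} (hb : ∀ x, ¬ r b x) (h : Relation.EqvGen r a b) :
    Relation.ReflTransGen r a b := by
  obtain ⟨c, h1, h2⟩ := eqvGen_join hconf h
  rwa [rtg_of_normal hb h2] at h1

private lemma prefix_normal {G : Type*} {R : List G → List G → Prop} {un p : List G}
    (hn : ∀ w', ¬ MStep R un w') (hp : p <+: un) : ∀ w', ¬ MStep R p w' := by
  rintro w' ⟨a, l, r, b, hR, h1, h2⟩
  obtain ⟨s, hs⟩ := hp
  refine hn (a ++ r ++ (b ++ s)) ⟨a, l, r, b ++ s, hR, ?_, by simp⟩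
  rw [← hs, h1]; simp

private lemma lift_mstep {G X : Type*} {R : List G → List G → Prop}
    {act : G → X → Option X} {u u' : List G} (x : X)
    (h : Relation.ReflTransGen (MStep R) u u') :
    Relation.ReflTransGen (PStep R act) (u, x) (u', x) := by
  induction h with
  | refl => exact .refl
  | tail _ h ih => exact ih.tail (Or.inl ⟨h, rfl⟩)

private lemma prefix_concat_cases {G : Type*} {wn w' : List G} {g : G}
    (h : wn <+: w' ++ [g]) : wn = w' ++ [g] ∨ wn <+: w' := by
  obtain ⟨s, hs⟩ := h
  rcases s.eq_nil_or_concat with rfl | ⟨s', a, rfl⟩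
  · simp at hs; exact Or.inl hs
  · right
    rw [List.concat_eq_append, ← List.append_assoc] at hs
    have := (List.append_inj' hs (by simp)).1
    exact ⟨s', this⟩

private lemma chain_lemma {G X : Type*} {R : List G → List G → Prop}
    {act : G → X → Option X} {v : List G} {y : X} :
    ∀ p : List G × X, Relation.ReflTransGen (PStep R act) p (v, y) →
      (∀ w', ¬ MStep R p.1 w') → ∀ wn, v <+: wn → wn <+: p.1 →
      ∃ z, Relation.ReflTransGen (PStep R act) p (wn, z) := by
  intro p h
  induction h using Relation.ReflTransGen.head_induction_on with
  | refl =>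
      intro _ wn h1 h2
      have : wn = v := h2.eq_of_length (le_antisymm h2.length_le h1.length_le)
      exact ⟨y, by rw [this]⟩
  | @head a c step rest ih =>
      intro hnorm wn hvwn hwna
      rcases step with ⟨hM, _⟩ | ⟨w', g, y', h1, h2, h3, h4⟩
      · exact absurd hM (hnorm _)
      · rw [h1] at hwna
        rcases prefix_concat_cases hwna with rfl | hpre
        · exact ⟨a.2, by rw [← h1]⟩
        · have hw'pre : w' <+: a.1 := by rw [h1]; exact ⟨[g], rfl⟩
          have hcnorm : ∀ w'', ¬ MStep R c.1 w'' := by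
            rw [h3]; exact prefix_normal hnorm hw'pre
          obtain ⟨z, hz⟩ := ih hcnorm wn hvwn (by rw [h3]; exact hpre)
          exact ⟨z, hz.head (Or.inr ⟨w', g, y', h1, h2, h3, h4⟩)⟩

/-- Lemma 12 of the paper: if `a = u·x` has normal form `v·y` in the
globalization of a confluent partial action, then `a ∈ w·X` for every `w` with
`v ⪯ w ⪯ u` in the prefix order (`u ⪯ p` iff the normal form of `u` is a
prefix of the normal form of `p`). Here `un`, `wn` are the normal forms of the
words `u`, `w`, and `(v, y)` is the (pair-)normal form of `(u, x)`. -/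
theorem stmt_7 {G X : Type*} (R : List G → List G → Prop) (act : G → X → Option X)
    (hnoeth : WellFounded (fun w₁ w₂ : List G => MStep R w₂ w₁))
    (hconfM : ∀ w s₁ s₂ : List G, Relation.ReflTransGen (MStep R) w s₁ →
      Relation.ReflTransGen (MStep R) w s₂ →
      ∃ t, Relation.ReflTransGen (MStep R) s₁ t ∧ Relation.ReflTransGen (MStep R) s₂ t)
    (hnosingle : ∀ (g : G) (r : List G), ¬ R [g] r)
    (hconfP : ∀ p q₁ q₂ : List G × X, Relation.ReflTransGen (PStep R act) p q₁ →
      Relation.ReflTransGen (PStep R act) p q₂ →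
      ∃ t, Relation.ReflTransGen (PStep R act) q₁ t ∧
        Relation.ReflTransGen (PStep R act) q₂ t)
    (u v w un wn : List G) (x : X) (y : X)
    (hvy_normal : ∀ q, ¬ PStep R act (v, y) q)
    (hnf : Relation.EqvGen (PStep R act) (u, x) (v, y))
    (hun_normal : ∀ w', ¬ MStep R un w')
    (hun : Relation.EqvGen (MStep R) u un)
    (hwn_normal : ∀ w', ¬ MStep R wn w')
    (hwn : Relation.EqvGen (MStep R) w wn)
    (hvw : v <+: wn) (hwu : wn <+: un) :
    ∃ z : X, Relation.EqvGen (PStep R act) (u, x) (w, z) := by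
  have hux_vy : Relation.ReflTransGen (PStep R act) (u, x) (v, y) :=
    eqvGen_to_normal hconfP hvy_normal hnf
  have hu_un : Relation.ReflTransGen (MStep R) u un :=
    eqvGen_to_normal hconfM hun_normal hun
  have hw_wn : Relation.ReflTransGen (MStep R) w wn :=
    eqvGen_to_normal hconfM hwn_normal hwn
  have hux_unx : Relation.ReflTransGen (PStep R act) (u, x) (un, x) :=
    lift_mstep x hu_un
  have hunx_vy : Relation.ReflTransGen (PStep R act) (un, x) (v, y) := by
    obtain ⟨t, h1, h2⟩ := hconfP (u, x) (un, x) (v, y) hux_unx hux_vy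
    rwa [rtg_of_normal hvy_normal h2] at h1
  obtain ⟨z, hz⟩ := chain_lemma (un, x) hunx_vy hun_normal wn hvw hwu
  refine ⟨z, ((rtg_eqvGen (hux_unx.trans hz)).trans _ _ _ ?_)⟩
  exact (rtg_eqvGen (lift_mstep (act := act) z hw_wn)).symm _ _
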